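/- For a bounded, mean-zero, 2π-periodic C² solution ψ of ψ_tt - ψ_xx = -ψ/(4t²) with associated free-wave part ν and remainder ω = ψ - ν, the following are equivalent: (i) ψ ≡ 0; (ii) ν ≡ 0; (iii) ω ≡ 0. -/

import Mathlib

open Real Set

open Filter Topology

section helpers

lemma line_hasDerivAt {E : Type*} [NormedAddCommGroup E] [NormedSpace ℝ E]
    {F : ℝ × ℝ → E} {a b c d s : ℝ}
    (h : DifferentiableAt ℝ F (a + c * s, b + d * s)) :
    HasDerivAt (fun r => F (a + c * r, b + d * r))
      (fderiv ℝ F (a + c * s, b + d * s) (c, d)) s := by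
  have hline : HasDerivAt (fun r : ℝ => ((a + c * r, b + d * r) : ℝ × ℝ)) ((c, d) : ℝ × ℝ) s := by
    have h1 : HasDerivAt (fun r : ℝ => a + c * r) c s := by
      simpa using (((hasDerivAt_id s).const_mul c).const_add a)
    have h2 : HasDerivAt (fun r : ℝ => b + d * r) d s := by
      simpa using (((hasDerivAt_id s).const_mul d).const_add b)
    exact h1.prodMk h2
  exact h.hasFDerivAt.comp_hasDerivAt s hline

lemma line2_hasDerivAt {F : ℝ × ℝ → ℝ} {a b c d s : ℝ} (w : ℝ × ℝ)
    (h : ContDiffAt ℝ 2 F (a + c * s, b + d * s)) :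
    HasDerivAt (fun r => fderiv ℝ F (a + c * r, b + d * r) w)
      (fderiv ℝ (fderiv ℝ F) (a + c * s, b + d * s) (c, d) w) s := by
  have hD : DifferentiableAt ℝ (fderiv ℝ F) (a + c * s, b + d * s) :=
    (h.fderiv_right (m := 1) (by norm_num)).differentiableAt (by norm_num)
  have h1 := line_hasDerivAt hD
  have h2 := h1.clm_apply (hasDerivAt_const s w)
  simpa using h2

end helpers

/-- Partial derivative in the first (time) variable. -/
noncomputable def pt (f : ℝ → ℝ → ℝ) : ℝ → ℝ → ℝ := fun t x => deriv (fun s => f s x) t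

/-- Partial derivative in the second (space) variable. -/
noncomputable def px (f : ℝ → ℝ → ℝ) : ℝ → ℝ → ℝ := fun t x => deriv (fun y => f t y) x

section helpers2

variable {u : ℝ → ℝ → ℝ} {τ t x : ℝ}

lemma hasDerivAt_time (h : DifferentiableAt ℝ (fun p : ℝ × ℝ => u p.1 p.2) (t, x)) :
    HasDerivAt (fun s => u s x) (fderiv ℝ (fun p : ℝ × ℝ => u p.1 p.2) (t, x) (1, 0)) t := by
  have := line_hasDerivAt (a := 0) (c := 1) (b := x) (d := 0) (s := t)
    (F := fun p : ℝ × ℝ => u p.1 p.2) (by simpa using h)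
  simpa using this

lemma hasDerivAt_space (h : DifferentiableAt ℝ (fun p : ℝ × ℝ => u p.1 p.2) (t, x)) :
    HasDerivAt (fun y => u t y) (fderiv ℝ (fun p : ℝ × ℝ => u p.1 p.2) (t, x) (0, 1)) x := by
  have := line_hasDerivAt (a := t) (c := 0) (b := 0) (d := 1) (s := x)
    (F := fun p : ℝ × ℝ => u p.1 p.2) (by simpa using h)
  simpa using this

lemma pt_eq_fderiv (h : DifferentiableAt ℝ (fun p : ℝ × ℝ => u p.1 p.2) (t, x)) :
    pt u t x = fderiv ℝ (fun p : ℝ × ℝ => u p.1 p.2) (t, x) (1, 0) :=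
  (hasDerivAt_time h).deriv

lemma px_eq_fderiv (h : DifferentiableAt ℝ (fun p : ℝ × ℝ => u p.1 p.2) (t, x)) :
    px u t x = fderiv ℝ (fun p : ℝ × ℝ => u p.1 p.2) (t, x) (0, 1) :=
  (hasDerivAt_space h).deriv

lemma ptpt_eq_fderiv (hu : ∀ p : ℝ × ℝ, τ < p.1 → ContDiffAt ℝ 2 (fun p : ℝ × ℝ => u p.1 p.2) p)
    (ht : τ < t) :
    pt (pt u) t x = fderiv ℝ (fderiv ℝ (fun p : ℝ × ℝ => u p.1 p.2)) (t, x) (1, 0) (1, 0) := by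
  have hev : (fun s => pt u s x) =ᶠ[nhds t]
      (fun s => fderiv ℝ (fun p : ℝ × ℝ => u p.1 p.2) (s, x) (1, 0)) := by
    filter_upwards [Ioi_mem_nhds ht] with s hs
    exact pt_eq_fderiv ((hu (s, x) hs).differentiableAt (by norm_num))
  have h2 : HasDerivAt (fun s => fderiv ℝ (fun p : ℝ × ℝ => u p.1 p.2) (s, x) (1, 0))
      (fderiv ℝ (fderiv ℝ (fun p : ℝ × ℝ => u p.1 p.2)) (t, x) (1, 0) (1, 0)) t := by
    have := line2_hasDerivAt (a := 0) (c := 1) (b := x) (d := 0) (s := t)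
      (F := fun p : ℝ × ℝ => u p.1 p.2) ((1 : ℝ), (0 : ℝ)) (by simpa using hu (t, x) ht)
    simpa using this
  show deriv (fun s => pt u s x) t = _
  rw [hev.deriv_eq]
  exact h2.deriv

lemma pxpx_eq_fderiv (hu : ∀ p : ℝ × ℝ, τ < p.1 → ContDiffAt ℝ 2 (fun p : ℝ × ℝ => u p.1 p.2) p)
    (ht : τ < t) :
    px (px u) t x = fderiv ℝ (fderiv ℝ (fun p : ℝ × ℝ => u p.1 p.2)) (t, x) (0, 1) (0, 1) := by
  have hev : (fun y => px u t y) =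
      (fun y => fderiv ℝ (fun p : ℝ × ℝ => u p.1 p.2) (t, y) (0, 1)) := by
    funext y
    exact px_eq_fderiv ((hu (t, y) ht).differentiableAt (by norm_num))
  have h2 : HasDerivAt (fun y => fderiv ℝ (fun p : ℝ × ℝ => u p.1 p.2) (t, y) (0, 1))
      (fderiv ℝ (fderiv ℝ (fun p : ℝ × ℝ => u p.1 p.2)) (t, x) (0, 1) (0, 1)) x := by
    have := line2_hasDerivAt (a := t) (c := 0) (b := 0) (d := 1) (s := x)
      (F := fun p : ℝ × ℝ => u p.1 p.2) ((0 : ℝ), (1 : ℝ)) (by simpa using hu (t, x) ht)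
    simpa using this
  show deriv (fun y => px u t y) x = _
  rw [hev]
  exact h2.deriv

lemma char_hasDerivAt (hu : ∀ p : ℝ × ℝ, τ < p.1 → ContDiffAt ℝ 2 (fun p : ℝ × ℝ => u p.1 p.2) p)
    {e s : ℝ} (he : e * e = 1) (hts : τ < t + s) :
    HasDerivAt (fun r => pt u (t + r) (x + e * r) - e * px u (t + r) (x + e * r))
      (pt (pt u) (t + s) (x + e * s) - px (px u) (t + s) (x + e * s)) s := by
  set F := fun p : ℝ × ℝ => u p.1 p.2 with hF
  have key : HasDerivAt (fun r => fderiv ℝ F (t + 1 * r, x + e * r) (1, 0)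
        - e * fderiv ℝ F (t + 1 * r, x + e * r) (0, 1))
      (fderiv ℝ (fderiv ℝ F) (t + 1 * s, x + e * s) (1, e) (1, 0)
        - e * fderiv ℝ (fderiv ℝ F) (t + 1 * s, x + e * s) (1, e) (0, 1)) s := by
    have hq : ContDiffAt ℝ 2 F (t + 1 * s, x + e * s) := hu _ (by simpa using hts)
    have ha := line2_hasDerivAt (a := t) (c := 1) (b := x) (d := e) (s := s) ((1 : ℝ), (0 : ℝ)) hq
    have hb := line2_hasDerivAt (a := t) (c := 1) (b := x) (d := e) (s := s) ((0 : ℝ), (1 : ℝ)) hq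
    exact ha.sub ((hb.const_mul e))
  have hval : fderiv ℝ (fderiv ℝ F) (t + 1 * s, x + e * s) (1, e) (1, 0)
        - e * fderiv ℝ (fderiv ℝ F) (t + 1 * s, x + e * s) (1, e) (0, 1)
      = pt (pt u) (t + s) (x + e * s) - px (px u) (t + s) (x + e * s) := by
    have hq : ContDiffAt ℝ 2 F ((t + s, x + e * s) : ℝ × ℝ) := hu _ (by simpa using hts)
    have hsym := (hq.isSymmSndFDerivAt (by simp)).eq ((1 : ℝ), (0 : ℝ)) ((0 : ℝ), (1 : ℝ))
    have hexp : ((1 : ℝ), e) = ((1 : ℝ), (0 : ℝ)) + e • ((0 : ℝ), (1 : ℝ)) := by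
      simp [Prod.ext_iff]
    rw [show (t + 1 * s, x + e * s) = ((t + s, x + e * s) : ℝ × ℝ) by norm_num]
    rw [hexp, map_add, map_smul]
    rw [ptpt_eq_fderiv hu (by simpa using hts), pxpx_eq_fderiv hu (by simpa using hts)]
    simp only [ContinuousLinearMap.add_apply, ContinuousLinearMap.coe_smul',
      Pi.smul_apply, smul_eq_mul]
    linear_combination
      (-(((fderiv ℝ (fderiv ℝ F) (t + s, x + e * s)) ((0:ℝ), (1:ℝ))) ((0:ℝ), (1:ℝ)))) * he
      - e * hsym
  rw [← hval]
  apply key.congr_of_eventuallyEq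
  filter_upwards [Ioi_mem_nhds (show τ - t < s by linarith)] with r hr
  have hd : DifferentiableAt ℝ F ((t + r, x + e * r) : ℝ × ℝ) :=
    ((hu (t + r, x + e * r) (by have := mem_Ioi.mp hr; simp only; linarith)).differentiableAt
      (by norm_num))
  rw [show t + 1 * r = t + r by ring]
  rw [pt_eq_fderiv hd, px_eq_fderiv hd]

end helpers2

section analytic

lemma abs_sub_le_of_deriv_bound {g φ g' φ' : ℝ → ℝ}
    (hg : ∀ s, 0 ≤ s → HasDerivAt g (g' s) s)
    (hφ : ∀ s, 0 ≤ s → HasDerivAt φ (φ' s) s)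
    (hle : ∀ s, 0 ≤ s → |g' s| ≤ φ' s)
    {S : ℝ} (hS : 0 ≤ S) : |g S - g 0| ≤ φ S - φ 0 := by
  have key : ∀ (f f' : ℝ → ℝ), (∀ s, 0 ≤ s → HasDerivAt f (f' s) s) →
      (∀ s, 0 ≤ s → 0 ≤ f' s) → f 0 ≤ f S := by
    intro f f' hf hf'
    have hmono : MonotoneOn f (Ici (0 : ℝ)) := by
      apply monotoneOn_of_deriv_nonneg (convex_Ici 0)
      · exact fun s hs => (hf s hs).continuousAt.continuousWithinAt
      · intro s hs
        rw [interior_Ici] at hs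
        exact ((hf s (le_of_lt hs)).differentiableAt).differentiableWithinAt
      · intro s hs
        rw [interior_Ici] at hs
        rw [(hf s (le_of_lt hs)).deriv]
        exact hf' s (le_of_lt hs)
    exact hmono self_mem_Ici hS hS
  have h1 : φ 0 + g 0 ≤ φ S + g S := by
    apply key (fun s => φ s + g s) (fun s => φ' s + g' s)
      (fun s hs => (hφ s hs).add (hg s hs))
    intro s hs
    have := abs_le.mp (hle s hs)
    linarith [this.1]
  have h2 : φ 0 - g 0 ≤ φ S - g S := by
    apply key (fun s => φ s - g s) (fun s => φ' s - g' s)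
      (fun s hs => (hφ s hs).sub (hg s hs))
    intro s hs
    have := abs_le.mp (hle s hs)
    linarith [this.2]
  rw [abs_sub_le_iff]
  constructor <;> linarith

lemma tendsto_c_div_add_atTop (c t : ℝ) :
    Tendsto (fun r : ℝ => c / (t + r)) atTop (nhds 0) :=
  tendsto_const_nhds.div_atTop (tendsto_atTop_add_const_left _ t tendsto_id)

/-- If `|g'| ≤ A/(4(t+s)³)` on `[0,∞)` and `g → 0`, then `|g 0| ≤ A/(8t²)`. -/
lemma decay_cubed {g g' : ℝ → ℝ} {A t : ℝ} (ht : 0 < t) (hA : 0 ≤ A)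
    (hg : ∀ s, 0 ≤ s → HasDerivAt g (g' s) s)
    (hg' : ∀ s, 0 ≤ s → |g' s| ≤ A / (4 * (t + s) ^ 3))
    (hlim : Tendsto g atTop (nhds 0)) : |g 0| ≤ A / (8 * t ^ 2) := by
  set φ : ℝ → ℝ := fun s => -(A / 8) * ((t + s) ^ 2)⁻¹ with hφdef
  have hφ : ∀ s, 0 ≤ s → HasDerivAt φ (A / (4 * (t + s) ^ 3)) s := by
    intro s hs
    have hts : (0 : ℝ) < t + s := by linarith
    have h1 : HasDerivAt (fun r : ℝ => (t + r) ^ 2) (2 * (t + s)) s := by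
      have := ((hasDerivAt_id s).const_add t).pow 2
      simpa [mul_comm, Pi.pow_def] using this
    have h2 := (h1.inv (by positivity)).const_mul (-(A / 8))
    have e : A / (4 * (t + s) ^ 3) = -(A / 8) * (-(2 * (t + s)) / ((t + s) ^ 2) ^ 2) := by
      field_simp
      ring
    rw [e]
    exact h2
  have hbound : ∀ S, 0 ≤ S → |g 0| ≤ |g S| + A / (8 * t ^ 2) := by
    intro S hS
    have h := abs_sub_le_of_deriv_bound hg hφ (fun s hs => hg' s hs) hS
    have hφS : φ S - φ 0 ≤ A / (8 * t ^ 2) := by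
      have h1 : (0:ℝ) < t + S := by linarith
      have h2 : φ S ≤ 0 := by
        rw [hφdef]; simp only
        have : (0:ℝ) ≤ ((t + S) ^ 2)⁻¹ := by positivity
        nlinarith
      have h3 : φ 0 = -(A / 8) * (t ^ 2)⁻¹ := by rw [hφdef]; simp
      have : -(φ 0) = A / (8 * t ^ 2) := by rw [h3]; field_simp
      linarith
    have habs : |g 0| - |g S| ≤ |g S - g 0| := by
      have := abs_sub_abs_le_abs_sub (g 0) (g S)
      rwa [abs_sub_comm] at this
    linarith
  have hlim2 : Tendsto (fun S => |g S| + A / (8 * t ^ 2)) atTop (nhds (0 + A / (8 * t ^ 2))) := by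
    have h0 : Tendsto (fun S => |g S|) atTop (nhds (0:ℝ)) := by
      simpa using hlim.abs
    exact h0.add tendsto_const_nhds
  have := ge_of_tendsto hlim2
    (by filter_upwards [eventually_ge_atTop (0:ℝ)] with S hS using hbound S hS)
  simpa using this

/-- If `|g'| ≤ B/(t+s)²` on `[0,∞)` and `g → 0`, then `|g 0| ≤ B/t`. -/
lemma decay_squared {g g' : ℝ → ℝ} {B t : ℝ} (ht : 0 < t) (hB : 0 ≤ B)
    (hg : ∀ s, 0 ≤ s → HasDerivAt g (g' s) s)
    (hg' : ∀ s, 0 ≤ s → |g' s| ≤ B / (t + s) ^ 2)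
    (hlim : Tendsto g atTop (nhds 0)) : |g 0| ≤ B / t := by
  set φ : ℝ → ℝ := fun s => -B * (t + s)⁻¹ with hφdef
  have hφ : ∀ s, 0 ≤ s → HasDerivAt φ (B / (t + s) ^ 2) s := by
    intro s hs
    have hts : (0 : ℝ) < t + s := by linarith
    have h1 : HasDerivAt (fun r : ℝ => t + r) 1 s := (hasDerivAt_id s).const_add t
    have h2 := (h1.inv (by positivity)).const_mul (-B)
    have e : B / (t + s) ^ 2 = -B * (-1 / (t + s) ^ 2) := by ring
    rw [e]
    exact h2
  have hbound : ∀ S, 0 ≤ S → |g 0| ≤ |g S| + B / t := by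
    intro S hS
    have h := abs_sub_le_of_deriv_bound hg hφ (fun s hs => hg' s hs) hS
    have hφS : φ S - φ 0 ≤ B / t := by
      have h1 : (0:ℝ) < t + S := by linarith
      have h2 : φ S ≤ 0 := by
        rw [hφdef]; simp only
        have : (0:ℝ) ≤ (t + S)⁻¹ := by positivity
        nlinarith
      have h3 : -(φ 0) = B / t := by rw [hφdef]; field_simp; ring
      linarith
    have habs : |g 0| - |g S| ≤ |g S - g 0| := by
      have := abs_sub_abs_le_abs_sub (g 0) (g S)
      rwa [abs_sub_comm] at this
    linarith
  have hlim2 : Tendsto (fun S => |g S| + B / t) atTop (nhds (0 + B / t)) := by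
    have h0 : Tendsto (fun S => |g S|) atTop (nhds (0:ℝ)) := by
      simpa using hlim.abs
    exact h0.add tendsto_const_nhds
  have := ge_of_tendsto hlim2
    (by filter_upwards [eventually_ge_atTop (0:ℝ)] with S hS using hbound S hS)
  simpa using this

lemma eq_zero_at_left_endpoint {f : ℝ → ℝ} {t₀ : ℝ}
    (hc : ContinuousWithinAt f (Ici t₀) t₀)
    (h : ∀ t, t₀ < t → f t = 0) : f t₀ = 0 := by
  have h1 : Tendsto f (nhdsWithin t₀ (Ioi t₀)) (nhds (f t₀)) :=
    hc.tendsto.mono_left (nhdsWithin_mono _ Ioi_subset_Ici_self)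
  have h2 : Tendsto f (nhdsWithin t₀ (Ioi t₀)) (nhds 0) := by
    apply Tendsto.congr' _ tendsto_const_nhds
    filter_upwards [self_mem_nhdsWithin] with s hs using (h s hs).symm
  exact tendsto_nhds_unique h1 h2

end analytic

/-- For a bounded mean-zero periodic solution `ψ` of `ψ_tt - ψ_xx = -ψ/(4t²)` with
associated free-wave part `ν` and remainder `ω = ψ - ν`, the following are
equivalent: `ψ ≡ 0`, `ν ≡ 0`, `ω ≡ 0`. -/
theorem psi_nu_omega_zero_equivalent
    (ψ ν : ℝ → ℝ → ℝ) (t₀ C₀ Cω : ℝ) (ht₀ : 0 < t₀)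
    (hC2 : ContDiff ℝ 2 (fun p : ℝ × ℝ => ψ p.1 p.2))
    (hper : ∀ t x : ℝ, ψ t (x + 2 * π) = ψ t x)
    (heq : ∀ t : ℝ, 0 < t → ∀ x : ℝ,
      pt (pt ψ) t x - px (px ψ) t x = -ψ t x / (4 * t ^ 2))
    (hmean : ∀ t : ℝ, 0 < t → ∫ x in (0:ℝ)..(2 * π), ψ t x = 0)
    (hbd : ∀ t : ℝ, t₀ ≤ t → ∀ x : ℝ, |ψ t x| ≤ C₀)
    -- ν is the ψ-associated solution of the free wave equation,
    -- with remainder ω = ψ - ν: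
    (hνC2 : ContDiffOn ℝ 2 (fun p : ℝ × ℝ => ν p.1 p.2) (Ici t₀ ×ˢ univ))
    (hwave : ∀ t x : ℝ, t₀ ≤ t → pt (pt ν) t x = px (px ν) t x)
    (hω : ∀ t x : ℝ, t₀ ≤ t →
      |ψ t x - ν t x| ≤ Cω / t ∧ |pt ψ t x - pt ν t x| ≤ Cω / t ∧
      |px ψ t x - px ν t x| ≤ Cω / t) :
    ((∀ t x : ℝ, t₀ ≤ t → ψ t x = 0) ↔ (∀ t x : ℝ, t₀ ≤ t → ν t x = 0)) ∧
    ((∀ t x : ℝ, t₀ ≤ t → ψ t x = 0) ↔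
      (∀ t x : ℝ, t₀ ≤ t → ψ t x - ν t x = 0)) := by
  have huψ : ∀ p : ℝ × ℝ, t₀ < p.1 → ContDiffAt ℝ 2 (fun p : ℝ × ℝ => ψ p.1 p.2) p :=
    fun p _ => hC2.contDiffAt
  have huν : ∀ p : ℝ × ℝ, t₀ < p.1 → ContDiffAt ℝ 2 (fun p : ℝ × ℝ => ν p.1 p.2) p := by
    intro p hp
    apply hνC2.contDiffAt
    apply mem_of_superset ((isOpen_Ioi.prod isOpen_univ).mem_nhds
      (Set.mk_mem_prod (mem_Ioi.mpr hp) (mem_univ _)))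
    exact prod_mono Ioi_subset_Ici_self (subset_refl _)
  have hCω : 0 ≤ Cω := by
    have h1 := (hω t₀ 0 le_rfl).1
    have h2 : 0 ≤ Cω / t₀ := le_trans (abs_nonneg _) h1
    have h3 := mul_nonneg h2 ht₀.le
    rwa [div_mul_cancel₀ _ (ne_of_gt ht₀)] at h3
  have hψcont : ∀ x, ContinuousWithinAt (fun t => ψ t x) (Ici t₀) t₀ := by
    intro x
    exact ((hC2.continuous.comp (continuous_id.prodMk continuous_const)) :
      Continuous fun t => ψ t x).continuousWithinAt
  have hνcont : ∀ x, ContinuousWithinAt (fun t => ν t x) (Ici t₀) t₀ := by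
    intro x
    have hcF := hνC2.continuousOn
    have : ContinuousOn (fun t => ν t x) (Ici t₀) :=
      hcF.comp ((continuous_id.prodMk continuous_const).continuousOn)
        (fun t ht => ⟨ht, mem_univ _⟩)
    exact this.continuousWithinAt self_mem_Ici
  have habs_e : ∀ e : ℝ, e * e = 1 → |e| = 1 := by
    intro e he
    nlinarith [abs_nonneg e, sq_abs e, sq_nonneg (|e| - 1), sq_nonneg (|e| + 1)]
  -- Direction A : ψ ≡ 0 → ν ≡ 0
  have dirA : (∀ t x : ℝ, t₀ ≤ t → ψ t x = 0) → (∀ t x : ℝ, t₀ ≤ t → ν t x = 0) := by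
    intro hψ0
    have hptψ0 : ∀ t x : ℝ, t₀ < t → pt ψ t x = 0 := by
      intro t x ht
      have hev : (fun s => ψ s x) =ᶠ[nhds t] (fun _ => (0:ℝ)) := by
        filter_upwards [Ioi_mem_nhds ht] with s hs using hψ0 s x hs.le
      show deriv (fun s => ψ s x) t = 0
      rw [hev.deriv_eq]
      simp
    have hpxψ0 : ∀ t x : ℝ, t₀ ≤ t → px ψ t x = 0 := by
      intro t x ht
      have hev : (fun y => ψ t y) = (fun _ => (0:ℝ)) := funext fun y => hψ0 t y ht
      show deriv (fun y => ψ t y) x = 0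
      rw [hev]
      simp
    have hνbd : ∀ t : ℝ, t₀ < t → ∀ x : ℝ,
        |ν t x| ≤ Cω / t ∧ |pt ν t x| ≤ Cω / t ∧ |px ν t x| ≤ Cω / t := by
      intro t ht x
      obtain ⟨h1, h2, h3⟩ := hω t x ht.le
      rw [hψ0 t x ht.le] at h1
      rw [hptψ0 t x ht] at h2
      rw [hpxψ0 t x ht.le] at h3
      rw [zero_sub, abs_neg] at h1 h2 h3
      exact ⟨h1, h2, h3⟩
    have hchar : ∀ t : ℝ, t₀ < t → ∀ x : ℝ, ∀ e : ℝ, e * e = 1 →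
        pt ν t x - e * px ν t x = 0 := by
      intro t ht x e he
      set g : ℝ → ℝ := fun r => pt ν (t + r) (x + e * r) - e * px ν (t + r) (x + e * r) with hgdef
      have hg : ∀ s, 0 ≤ s → HasDerivAt g 0 s := by
        intro s hs
        have h := char_hasDerivAt (x := x) huν he (show t₀ < t + s by linarith)
        rwa [hwave (t + s) (x + e * s) (by linarith), sub_self] at h
      have hlim : Tendsto g atTop (nhds 0) := by
        apply squeeze_zero_norm' (a := fun r => Cω / (t + r) + Cω / (t + r))
        · filter_upwards [eventually_ge_atTop (0:ℝ)] with r hr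
          have hb := hνbd (t + r) (by linarith) (x + e * r)
          calc ‖g r‖ ≤ |pt ν (t + r) (x + e * r)| + |e * px ν (t + r) (x + e * r)| :=
                abs_sub _ _
            _ ≤ Cω / (t + r) + Cω / (t + r) := by
                rw [abs_mul, habs_e e he, one_mul]
                exact add_le_add hb.2.1 hb.2.2
        · have := (tendsto_c_div_add_atTop Cω t).add (tendsto_c_div_add_atTop Cω t)
          simpa using this
      have h0 : |g 0| ≤ (0:ℝ) / (8 * t ^ 2) :=
        decay_cubed (by linarith) le_rfl hg (fun s hs => by simp) hlim
      have : g 0 = 0 := by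
        rw [zero_div] at h0
        exact abs_eq_zero.mp (le_antisymm h0 (abs_nonneg _))
      simpa [hgdef] using this
    have hνt0 : ∀ t : ℝ, t₀ < t → ∀ x : ℝ, pt ν t x = 0 := by
      intro t ht x
      have h1 := hchar t ht x 1 (by norm_num)
      have h2 := hchar t ht x (-1) (by norm_num)
      linarith
    have hν0' : ∀ t : ℝ, t₀ < t → ∀ x : ℝ, ν t x = 0 := by
      intro t ht x
      set g : ℝ → ℝ := fun r => ν (t + r) x with hgdef
      have hg : ∀ s, 0 ≤ s → HasDerivAt g 0 s := by
        intro s hs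
        have hd : DifferentiableAt ℝ (fun p : ℝ × ℝ => ν p.1 p.2) (t + s, x) :=
          (huν (t + s, x) (by simp only; linarith)).differentiableAt (by norm_num)
        have h1 := hasDerivAt_time hd
        rw [← pt_eq_fderiv hd, hνt0 (t + s) (by linarith) x] at h1
        have h2 := h1.comp s ((hasDerivAt_id s).const_add t)
        simpa [Function.comp_def] using h2
      have hlim : Tendsto g atTop (nhds 0) := by
        apply squeeze_zero_norm' (a := fun r => Cω / (t + r))
        · filter_upwards [eventually_ge_atTop (0:ℝ)] with r hr
          exact (hνbd (t + r) (by linarith) x).1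
        · exact tendsto_c_div_add_atTop Cω t
      have h0 : |g 0| ≤ (0:ℝ) / (8 * t ^ 2) :=
        decay_cubed (by linarith) le_rfl hg (fun s hs => by simp) hlim
      have : g 0 = 0 := by
        rw [zero_div] at h0
        exact abs_eq_zero.mp (le_antisymm h0 (abs_nonneg _))
      simpa [hgdef] using this
    intro t x ht
    rcases eq_or_lt_of_le ht with h | h
    · rw [← h]
      exact eq_zero_at_left_endpoint (f := fun s => ν s x) (hνcont x) (fun s hs => hν0' s hs x)
    · exact hν0' t h x
  -- Direction B : ν ≡ 0 → ψ ≡ 0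
  have dirB : (∀ t x : ℝ, t₀ ≤ t → ν t x = 0) → (∀ t x : ℝ, t₀ ≤ t → ψ t x = 0) := by
    intro hν0
    have hptν0 : ∀ t x : ℝ, t₀ < t → pt ν t x = 0 := by
      intro t x ht
      have hev : (fun s => ν s x) =ᶠ[nhds t] (fun _ => (0:ℝ)) := by
        filter_upwards [Ioi_mem_nhds ht] with s hs using hν0 s x hs.le
      show deriv (fun s => ν s x) t = 0
      rw [hev.deriv_eq]; simp
    have hpxν0 : ∀ t x : ℝ, t₀ ≤ t → px ν t x = 0 := by
      intro t x ht
      have hev : (fun y => ν t y) = (fun _ => (0:ℝ)) := funext fun y => hν0 t y ht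
      show deriv (fun y => ν t y) x = 0
      rw [hev]; simp
    have hψbd : ∀ t : ℝ, t₀ < t → ∀ x : ℝ,
        |ψ t x| ≤ Cω / t ∧ |pt ψ t x| ≤ Cω / t ∧ |px ψ t x| ≤ Cω / t := by
      intro t ht x
      obtain ⟨h1, h2, h3⟩ := hω t x ht.le
      rw [hν0 t x ht.le] at h1
      rw [hptν0 t x ht] at h2
      rw [hpxν0 t x ht.le] at h3
      rw [sub_zero] at h1 h2 h3
      exact ⟨h1, h2, h3⟩
    -- bootstrap step
    have step : ∀ A : ℝ, 0 ≤ A → (∀ t : ℝ, t₀ < t → ∀ x : ℝ, |ψ t x| ≤ A / t) →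
        (∀ t : ℝ, t₀ < t → ∀ x : ℝ, |ψ t x| ≤ A / 8 / t) := by
      intro A hA hP
      have sub1 : ∀ e : ℝ, e * e = 1 → ∀ t : ℝ, t₀ < t → ∀ x : ℝ,
          |pt ψ t x - e * px ψ t x| ≤ A / (8 * t ^ 2) := by
        intro e he t ht x
        set g : ℝ → ℝ := fun r => pt ψ (t + r) (x + e * r) - e * px ψ (t + r) (x + e * r)
          with hgdef
        have hg : ∀ s, 0 ≤ s →
            HasDerivAt g (-ψ (t + s) (x + e * s) / (4 * (t + s) ^ 2)) s := by
          intro s hs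
          have h := char_hasDerivAt (x := x) huψ he (show t₀ < t + s by linarith)
          rwa [heq (t + s) (by linarith) (x + e * s)] at h
        have hg' : ∀ s, 0 ≤ s →
            |(-ψ (t + s) (x + e * s) / (4 * (t + s) ^ 2))| ≤ A / (4 * (t + s) ^ 3) := by
          intro s hs
          have hts : (0:ℝ) < t + s := by linarith
          rw [abs_div, abs_neg, abs_of_pos (by positivity : (0:ℝ) < 4 * (t + s) ^ 2)]
          have hb : |ψ (t + s) (x + e * s)| ≤ A / (t + s) := hP (t + s) (by linarith) _
          calc |ψ (t + s) (x + e * s)| / (4 * (t + s) ^ 2)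
              ≤ (A / (t + s)) / (4 * (t + s) ^ 2) :=
                (div_le_div_iff_of_pos_right (by positivity)).mpr hb
            _ = A / (4 * (t + s) ^ 3) := by rw [div_div]; congr 1; ring
        have hlim : Tendsto g atTop (nhds 0) := by
          apply squeeze_zero_norm' (a := fun r => Cω / (t + r) + Cω / (t + r))
          · filter_upwards [eventually_ge_atTop (0:ℝ)] with r hr
            have hb := hψbd (t + r) (by linarith) (x + e * r)
            calc ‖g r‖ ≤ |pt ψ (t + r) (x + e * r)| + |e * px ψ (t + r) (x + e * r)| :=
                  abs_sub _ _
              _ ≤ Cω / (t + r) + Cω / (t + r) := by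
                  rw [abs_mul, habs_e e he, one_mul]
                  exact add_le_add hb.2.1 hb.2.2
          · have := (tendsto_c_div_add_atTop Cω t).add (tendsto_c_div_add_atTop Cω t)
            simpa using this
        have h0 := decay_cubed (show (0:ℝ) < t by linarith) hA hg hg' hlim
        simpa [hgdef] using h0
      have sub2 : ∀ t : ℝ, t₀ < t → ∀ x : ℝ, |pt ψ t x| ≤ A / (8 * t ^ 2) := by
        intro t ht x
        have h1 := sub1 1 (by norm_num) t ht x
        have h2 := sub1 (-1) (by norm_num) t ht x
        rw [one_mul] at h1
        have h2' : |pt ψ t x + px ψ t x| ≤ A / (8 * t ^ 2) := by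
          have : pt ψ t x - (-1) * px ψ t x = pt ψ t x + px ψ t x := by ring
          rwa [this] at h2
        have e1 := abs_le.mp h1
        have e2 := abs_le.mp h2'
        rw [abs_le]
        constructor <;> · cases' e1 with a b; cases' e2 with c d; linarith
      intro t ht x
      set g : ℝ → ℝ := fun r => ψ (t + r) x with hgdef
      have hg : ∀ s, 0 ≤ s → HasDerivAt g (pt ψ (t + s) x) s := by
        intro s hs
        have hd : DifferentiableAt ℝ (fun p : ℝ × ℝ => ψ p.1 p.2) (t + s, x) :=
          hC2.differentiable (by norm_num) |>.differentiableAt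
        have h1 := hasDerivAt_time hd
        rw [← pt_eq_fderiv hd] at h1
        have h2 := h1.comp s ((hasDerivAt_id s).const_add t)
        simpa [Function.comp_def] using h2
      have hg' : ∀ s, 0 ≤ s → |pt ψ (t + s) x| ≤ (A / 8) / (t + s) ^ 2 := by
        intro s hs
        have := sub2 (t + s) (by linarith) x
        rwa [show A / (8 * (t + s) ^ 2) = (A / 8) / (t + s) ^ 2 by rw [div_div]] at this
      have hlim : Tendsto g atTop (nhds 0) := by
        apply squeeze_zero_norm' (a := fun r => Cω / (t + r))
        · filter_upwards [eventually_ge_atTop (0:ℝ)] with r hr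
          exact (hψbd (t + r) (by linarith) x).1
        · exact tendsto_c_div_add_atTop Cω t
      have h0 := decay_squared (show (0:ℝ) < t by linarith) (by positivity) hg hg' hlim
      simpa [hgdef] using h0
    have init : ∀ t : ℝ, t₀ < t → ∀ x : ℝ, |ψ t x| ≤ Cω / 8 ^ (0:ℕ) / t := by
      intro t ht x
      simpa using (hψbd t ht x).1
    have iter : ∀ n : ℕ, ∀ t : ℝ, t₀ < t → ∀ x : ℝ, |ψ t x| ≤ Cω / 8 ^ n / t := by
      intro n
      induction n with
      | zero => exact init
      | succ n ih =>
        have h := step (Cω / 8 ^ n) (by positivity) ih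
        intro t ht x
        have := h t ht x
        rwa [show Cω / 8 ^ n / 8 = Cω / 8 ^ (n + 1) by rw [div_div, ← pow_succ]] at this
    have hψ0' : ∀ t : ℝ, t₀ < t → ∀ x : ℝ, ψ t x = 0 := by
      intro t ht x
      have htpos : (0:ℝ) < t := by linarith
      have hlim : Tendsto (fun n : ℕ => Cω / 8 ^ n / t) atTop (nhds 0) := by
        have h1 : Tendsto (fun n : ℕ => ((8:ℝ) ^ n)) atTop atTop :=
          tendsto_pow_atTop_atTop_of_one_lt (by norm_num)
        have h2 : Tendsto (fun n : ℕ => Cω / 8 ^ n) atTop (nhds 0) :=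
          tendsto_const_nhds.div_atTop h1
        have := h2.div_const t
        simpa using this
      have hle : |ψ t x| ≤ 0 :=
        ge_of_tendsto hlim (by filter_upwards with n using iter n t ht x)
      exact abs_eq_zero.mp (le_antisymm hle (abs_nonneg _))
    intro t x ht
    rcases eq_or_lt_of_le ht with h | h
    · rw [← h]
      exact eq_zero_at_left_endpoint (f := fun s => ψ s x) (hψcont x) (fun s hs => hψ0' s hs x)
    · exact hψ0' t h x
  -- Direction C : ψ - ν ≡ 0 → ψ ≡ 0
  have dirC : (∀ t x : ℝ, t₀ ≤ t → ψ t x - ν t x = 0) → (∀ t x : ℝ, t₀ ≤ t → ψ t x = 0) := by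
    intro h
    have hψ0' : ∀ t : ℝ, t₀ < t → ∀ x : ℝ, ψ t x = 0 := by
      intro t ht x
      have hxx : px (px ψ) t x = px (px ν) t x := by
        have hpx : ∀ y : ℝ, px ψ t y = px ν t y := by
          intro y
          have hfun : (fun z => ψ t z) = (fun z => ν t z) := by
            funext z
            have := h t z ht.le
            linarith
          show deriv (fun z => ψ t z) y = deriv (fun z => ν t z) y
          rw [hfun]
        show deriv (fun y => px ψ t y) x = deriv (fun y => px ν t y) x
        rw [funext hpx]
      have htt : pt (pt ψ) t x = pt (pt ν) t x := by
        have hpt : ∀ s : ℝ, t₀ < s → ∀ y : ℝ, pt ψ s y = pt ν s y := by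
          intro s hs y
          show deriv (fun r => ψ r y) s = deriv (fun r => ν r y) s
          apply Filter.EventuallyEq.deriv_eq
          filter_upwards [Ioi_mem_nhds hs] with r hr
          have := h r y (le_of_lt hr)
          linarith
        show deriv (fun s => pt ψ s x) t = deriv (fun s => pt ν s x) t
        apply Filter.EventuallyEq.deriv_eq
        filter_upwards [Ioi_mem_nhds ht] with s hs using hpt s hs x
      have h0 := heq t (by linarith) x
      rw [htt, hxx, hwave t x ht.le, sub_self] at h0
      have h4 : (4:ℝ) * t ^ 2 ≠ 0 := by
        have : (0:ℝ) < t := by linarith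
        positivity
      rcases div_eq_zero_iff.mp h0.symm with h5 | h5
      · linarith
      · exact absurd h5 h4
    intro t x ht
    rcases eq_or_lt_of_le ht with hh | hh
    · rw [← hh]
      exact eq_zero_at_left_endpoint (f := fun s => ψ s x) (hψcont x) (fun s hs => hψ0' s hs x)
    · exact hψ0' t hh x
  refine ⟨⟨dirA, dirB⟩, ⟨?_, ?_⟩⟩
  · intro hψ0 t x ht
    rw [hψ0 t x ht, dirA hψ0 t x ht, sub_zero]
  · intro h
    exact dirC h
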